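/- Let S = [[A, B], [C, D]] be a symplectic matrix. Then ℝ^d decomposes as the direct sum of the range of B and the image of the kernel of B under A: ℝ^d = R(B) ⊕ A(ker B). -/

import Mathlib

open Matrix

private lemma symp_key {d : ℕ} (A B C D : Matrix (Fin d) (Fin d) ℝ)
    (hS : (fromBlocks A B C D)ᵀ * fromBlocks 0 1 (-1) 0 * fromBlocks A B C D
        = fromBlocks (0 : Matrix (Fin d) (Fin d) ℝ) 1 (-1) 0)
    (x y : Fin d → ℝ) (hy : B *ᵥ y = 0) (hxy : A *ᵥ y = B *ᵥ x) : y = 0 := by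
  rw [fromBlocks_transpose, fromBlocks_multiply, fromBlocks_multiply, fromBlocks_inj] at hS
  obtain ⟨h1, h2, h3, h4⟩ := hS
  simp only [Matrix.mul_zero, Matrix.mul_one, Matrix.mul_neg, Matrix.zero_mul,
    Matrix.one_mul, Matrix.neg_mul, zero_add, add_zero] at h3 h4
  have hDA : Dᵀ * A - Bᵀ * C = 1 := by
    have : Dᵀ * A - Bᵀ * C = -(-(Dᵀ * A) + Bᵀ * C) := by
      rw [neg_add, neg_neg, ← sub_eq_add_neg]
    rw [this, h3, neg_neg]
  have hBD : Bᵀ * D = Dᵀ * B := (neg_add_eq_zero.mp h4).symm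
  have hy2 : y = Bᵀ *ᵥ (D *ᵥ x - C *ᵥ y) := by
    calc y = (Dᵀ * A - Bᵀ * C) *ᵥ y := by rw [hDA, Matrix.one_mulVec]
    _ = Dᵀ *ᵥ (A *ᵥ y) - Bᵀ *ᵥ (C *ᵥ y) := by
        rw [Matrix.sub_mulVec, ← Matrix.mulVec_mulVec, ← Matrix.mulVec_mulVec]
    _ = (Dᵀ * B) *ᵥ x - Bᵀ *ᵥ (C *ᵥ y) := by rw [hxy, Matrix.mulVec_mulVec]
    _ = Bᵀ *ᵥ (D *ᵥ x - C *ᵥ y) := by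
        rw [← hBD, Matrix.mulVec_sub, ← Matrix.mulVec_mulVec]
  have : y ⬝ᵥ y = 0 := by
    calc y ⬝ᵥ y = (Bᵀ *ᵥ (D *ᵥ x - C *ᵥ y)) ⬝ᵥ y := by rw [← hy2]
    _ = (D *ᵥ x - C *ᵥ y) ⬝ᵥ (B *ᵥ y) := by
        rw [Matrix.mulVec_transpose, ← Matrix.dotProduct_mulVec]
    _ = 0 := by rw [hy, dotProduct_zero]
  exact (dotProduct_self_eq_zero).mp this

theorem symplectic_range_B_compl_A_ker_B {d : ℕ} (A B C D : Matrix (Fin d) (Fin d) ℝ)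
    (hS : (fromBlocks A B C D)ᵀ * fromBlocks 0 1 (-1) 0 * fromBlocks A B C D
        = fromBlocks (0 : Matrix (Fin d) (Fin d) ℝ) 1 (-1) 0) :
    IsCompl (LinearMap.range (Matrix.toEuclideanLin B))
      ((LinearMap.ker (Matrix.toEuclideanLin B)).map (Matrix.toEuclideanLin A)) := by
  set fB := Matrix.toEuclideanLin B
  set fA := Matrix.toEuclideanLin A
  have key : ∀ (x y : EuclideanSpace ℝ (Fin d)), fB y = 0 → fA y = fB x → y = 0 := by
    intro x y hy hxy
    have h1 : B *ᵥ (WithLp.equiv 2 _ y) = 0 := by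
      have := congrArg (WithLp.equiv 2 (Fin d → ℝ)) hy
      simpa [fA, fB, Matrix.ofLp_toEuclideanLin_apply] using this
    have h2 : A *ᵥ (WithLp.equiv 2 _ y) = B *ᵥ (WithLp.equiv 2 _ x) := by
      have := congrArg (WithLp.equiv 2 (Fin d → ℝ)) hxy
      simpa [fA, fB, Matrix.ofLp_toEuclideanLin_apply] using this
    have := symp_key A B C D hS (WithLp.equiv 2 _ x) (WithLp.equiv 2 _ y) h1 h2
    have := congrArg (WithLp.equiv 2 (Fin d → ℝ)).symm this
    simpa using this
  have hdisj : Disjoint (LinearMap.range fB) ((LinearMap.ker fB).map fA) := by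
    rw [Submodule.disjoint_def]
    rintro v ⟨x, rfl⟩ ⟨y, hy, heq⟩
    have hz := key x y hy heq
    rw [hz, map_zero] at heq
    exact heq.symm
  refine ⟨hdisj, codisjoint_iff.mpr ?_⟩
  apply Submodule.eq_top_of_disjoint _ _ _ hdisj
  have hrn := LinearMap.finrank_range_add_finrank_ker fB
  have hinj : LinearMap.ker (fA.domRestrict (LinearMap.ker fB)) = ⊥ := by
    rw [LinearMap.ker_eq_bot']
    rintro ⟨y, hy⟩ h
    have : fA y = 0 := by simpa using h
    have : y = 0 := key 0 y hy (by simpa using this)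
    exact Subtype.ext this
  have hmap : Module.finrank ℝ ((LinearMap.ker fB).map fA) = Module.finrank ℝ (LinearMap.ker fB) := by
    have := LinearMap.finrank_range_add_finrank_ker (fA.domRestrict (LinearMap.ker fB))
    rw [hinj, finrank_bot, add_zero, LinearMap.range_domRestrict] at this
    exact this
  rw [hmap]
  exact hrn.ge
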